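/- Let X be a finite nonempty set, f : X → ℝ, and π₀ a pmf with full support. Define π_g(x) ∝ π₀(x)·exp(-g·f(x)). Then d/dg H(π_g) = -g·Var_{π_g}(f) + Cov_{π_g}(log π₀, f), where H denotes Shannon entropy and Cov_π(u,v) = E_π[uv] - E_π[u]E_π[v]. -/

import Mathlib

open Real BigOperators Finset Filter

def IsPMF {X : Type*} [Fintype X] (p : X → ℝ) : Prop :=
  (∀ x, 0 ≤ p x) ∧ ∑ x, p x = 1

noncomputable def expVal {X : Type*} [Fintype X] (p f : X → ℝ) : ℝ := ∑ x, p x * f x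

noncomputable def varVal {X : Type*} [Fintype X] (p f : X → ℝ) : ℝ :=
  expVal p (fun x => f x ^ 2) - (expVal p f) ^ 2

noncomputable def covVal {X : Type*} [Fintype X] (p u v : X → ℝ) : ℝ :=
  expVal p (fun x => u x * v x) - expVal p u * expVal p v

noncomputable def klDiv' {X : Type*} [Fintype X] (p q : X → ℝ) : ℝ :=
  ∑ x, p x * Real.log (p x / q x)

noncomputable def entropyF {X : Type*} [Fintype X] (p : X → ℝ) : ℝ :=
  -∑ x, p x * Real.log (p x)

noncomputable def tilt {X : Type*} [Fintype X] (π₀ f : X → ℝ) (g : ℝ) (x : X) : ℝ :=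
  π₀ x * Real.exp (-g * f x) / ∑ y, π₀ y * Real.exp (-g * f y)

lemma sum_exp_hasDerivAt {X : Type*} [Fintype X] (w f : X → ℝ) (s : ℝ) :
    HasDerivAt (fun t : ℝ => ∑ x, w x * Real.exp (-t * f x))
      (-∑ x, (w x * f x) * Real.exp (-s * f x)) s := by
  have h : ∀ x ∈ Finset.univ, HasDerivAt (fun t : ℝ => w x * Real.exp (-t * f x))
      (-((w x * f x) * Real.exp (-s * f x))) s := by
    intro x _
    have h1 : HasDerivAt (fun t : ℝ => -t * f x) (-(f x)) s := by
      simpa using ((hasDerivAt_id s).neg.mul_const (f x))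
    have h2 := (h1.exp).const_mul (w x)
    exact h2.congr_deriv (by ring)
  have := HasDerivAt.fun_sum h
  simpa using this


/-- d/dg H(π_g) = -g·Var_{π_g}(f) + Cov_{π_g}(log π₀, f). -/
theorem tilt_entropy_hasDerivAt {X : Type*} [Fintype X] [Nonempty X]
    (π₀ f : X → ℝ) (h0 : IsPMF π₀) (hpos : ∀ x, 0 < π₀ x) (g : ℝ) :
    HasDerivAt (fun s : ℝ => entropyF (tilt π₀ f s))
      (-g * varVal (tilt π₀ f g) f +
        covVal (tilt π₀ f g) (fun x => Real.log (π₀ x)) f) g := by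
  set Z : ℝ → ℝ := fun s => ∑ x, π₀ x * Real.exp (-s * f x) with hZdef
  set A : ℝ → ℝ := fun s => ∑ x, (π₀ x * f x) * Real.exp (-s * f x) with hAdef
  set B : ℝ → ℝ := fun s => ∑ x, (π₀ x * f x * f x) * Real.exp (-s * f x) with hBdef
  set C : ℝ → ℝ := fun s => ∑ x, (π₀ x * Real.log (π₀ x)) * Real.exp (-s * f x) with hCdef
  set D : ℝ → ℝ := fun s => ∑ x, (π₀ x * Real.log (π₀ x) * f x) * Real.exp (-s * f x) with hDdef
  have Zpos : ∀ s, 0 < Z s := fun s =>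
    Finset.sum_pos (fun x _ => mul_pos (hpos x) (Real.exp_pos _)) Finset.univ_nonempty
  have Zne : ∀ s, Z s ≠ 0 := fun s => (Zpos s).ne'
  -- derivatives
  have hZ : HasDerivAt Z (-(A g)) g := sum_exp_hasDerivAt π₀ f g
  have hA : HasDerivAt A (-(B g)) g := by
    have := sum_exp_hasDerivAt (fun x => π₀ x * f x) f g
    convert this using 2
  have hC : HasDerivAt C (-(D g)) g :=
    sum_exp_hasDerivAt (fun x => π₀ x * Real.log (π₀ x)) f g
  -- entropy formula
  have key : ∀ s, entropyF (tilt π₀ f s) = -((C s - s * A s) / Z s) + Real.log (Z s) := by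
    intro s
    have hterm : ∀ x, tilt π₀ f s x * Real.log (tilt π₀ f s x)
        = ((π₀ x * Real.log (π₀ x)) * Real.exp (-s * f x)
          - s * ((π₀ x * f x) * Real.exp (-s * f x))
          - (π₀ x * Real.exp (-s * f x)) * Real.log (Z s)) / Z s := by
      intro x
      have hnum : 0 < π₀ x * Real.exp (-s * f x) := mul_pos (hpos x) (Real.exp_pos _)
      have hlog : Real.log (tilt π₀ f s x)
          = Real.log (π₀ x) + (-s * f x) - Real.log (Z s) := by
        unfold tilt
        rw [Real.log_div hnum.ne' (Zne s), Real.log_mul (hpos x).ne' (Real.exp_ne_zero _),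
          Real.log_exp]
      rw [hlog]
      unfold tilt
      rw [div_mul_eq_mul_div]
      congr 1
      ring
    unfold entropyF
    rw [show (∑ x, tilt π₀ f s x * Real.log (tilt π₀ f s x))
        = ∑ x, ((π₀ x * Real.log (π₀ x)) * Real.exp (-s * f x)
          - s * ((π₀ x * f x) * Real.exp (-s * f x))
          - (π₀ x * Real.exp (-s * f x)) * Real.log (Z s)) / Z s from
      Finset.sum_congr rfl fun x _ => hterm x]
    rw [← Finset.sum_div, Finset.sum_sub_distrib, Finset.sum_sub_distrib,
      ← Finset.mul_sum, ← Finset.sum_mul]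
    have h1 : (∑ x, (π₀ x * Real.log (π₀ x)) * Real.exp (-s * f x)) = C s := rfl
    have h2 : (∑ x, (π₀ x * f x) * Real.exp (-s * f x)) = A s := rfl
    have h3 : (∑ x, π₀ x * Real.exp (-s * f x)) = Z s := rfl
    rw [h1, h2, h3]
    field_simp [Zne s]
    ring
  have hfun : (fun s : ℝ => entropyF (tilt π₀ f s))
      = fun s => -((C s - s * A s) / Z s) + Real.log (Z s) := funext key
  rw [hfun]
  -- derivative of the explicit formula
  have hsa : HasDerivAt (fun s : ℝ => s * A s) (1 * A g + g * -(B g)) g :=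
    (hasDerivAt_id g).mul hA
  have hnum : HasDerivAt (fun s => C s - s * A s) (-(D g) - (1 * A g + g * -(B g))) g :=
    hC.sub hsa
  have hmain : HasDerivAt (fun s => -((C s - s * A s) / Z s) + Real.log (Z s))
      (-(((-(D g) - (1 * A g + g * -(B g))) * Z g - (C g - g * A g) * (-(A g))) / Z g ^ 2)
        + (-(A g) / Z g)) g :=
    ((hnum.div hZ (Zne g)).neg).add (hZ.log (Zne g))
  convert hmain using 1
  -- identify the statistics
  have hstat : ∀ (u : X → ℝ) (w : X → ℝ), (∀ x, w x = π₀ x * u x) →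
      expVal (tilt π₀ f g) u = (∑ x, w x * Real.exp (-g * f x)) / Z g := by
    intro u w hw
    unfold expVal tilt
    simp only [div_mul_eq_mul_div]
    rw [← Finset.sum_div]
    exact congrArg₂ (· / ·) (Finset.sum_congr rfl fun x _ => by rw [hw]; ring) rfl
  have hEf : expVal (tilt π₀ f g) f = A g / Z g :=
    hstat f (fun x => π₀ x * f x) (fun x => rfl)
  have hEf2 : expVal (tilt π₀ f g) (fun x => f x ^ 2) = B g / Z g :=
    hstat _ (fun x => π₀ x * f x * f x) (fun x => by ring)
  have hEl : expVal (tilt π₀ f g) (fun x => Real.log (π₀ x)) = C g / Z g :=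
    hstat _ (fun x => π₀ x * Real.log (π₀ x)) (fun x => rfl)
  have hElf : expVal (tilt π₀ f g) (fun x => Real.log (π₀ x) * f x) = D g / Z g :=
    hstat _ (fun x => π₀ x * Real.log (π₀ x) * f x) (fun x => by ring)
  unfold varVal covVal
  rw [hEf, hEf2, hEl, hElf]
  field_simp [Zne g]
  ring
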